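/- A connected graph G of order n with maximum degree Δ(G) satisfies rvc(G) ≤ n − Δ(G). -/

import Mathlib

open SimpleGraph

/-- A coloring `c` is a rainbow vertex-coloring witness with `k` colors: any two vertices are
joined by a path whose internal vertices have distinct colors, all among the first `k` colors. -/
def IsRainbowVColoring {V : Type*} (G : SimpleGraph V) (c : V → ℕ) (k : ℕ) : Prop :=
  ∀ u v : V, ∃ p : G.Walk u v, p.IsPath ∧ (p.support.tail.dropLast.map c).Nodup ∧
    ∀ w ∈ p.support.tail.dropLast, c w < k

/-- The rainbow vertex-connection number. -/
noncomputable def rvc {V : Type*} (G : SimpleGraph V) : ℕ :=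
  sInf {k : ℕ | ∃ c : V → ℕ, IsRainbowVColoring G c k}

section Aux

variable {V : Type*} [DecidableEq V] {G : SimpleGraph V} {v : V} {par : V → V}

lemma exists_parent (hG : G.Connected) (v u : V) (hu : u ≠ v) :
    ∃ w, G.Adj u w ∧ G.dist w v + 1 = G.dist u v := by
  obtain ⟨p, hp⟩ := hG.exists_walk_length_eq_dist u v
  cases p with
  | nil => exact absurd rfl hu
  | @cons _ w _ h q =>
    refine ⟨w, h, ?_⟩
    have h1 : G.dist w v ≤ q.length := SimpleGraph.dist_le q
    obtain ⟨r, hr⟩ := hG.exists_walk_length_eq_dist w v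
    have h2 : G.dist u v ≤ G.dist w v + 1 := by
      have := SimpleGraph.dist_le (SimpleGraph.Walk.cons h r)
      simpa [hr, Nat.add_comm] using this
    simp only [SimpleGraph.Walk.length_cons] at hp
    omega

lemma iter_depth (hv : par v = v)
    (hlt : ∀ u, u ≠ v → G.dist (par u) v < G.dist u v) :
    ∀ (k : ℕ) (u : V), par^[k] u ≠ v → G.dist (par^[k] u) v + k ≤ G.dist u v := by
  intro k
  induction k with
  | zero => intro u _; simp
  | succ k ih =>
    intro u hz
    have hu : u ≠ v := by
      rintro rfl
      exact hz (by rw [Function.iterate_fixed hv])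
    rw [Function.iterate_succ_apply] at hz ⊢
    have := ih (par u) hz
    have := hlt u hu
    omega

/-- Walk to the root along the parent function, with fuel. -/
noncomputable def wtr (hadj : ∀ u, u ≠ v → G.Adj u (par u))
    (hzero : ∀ u : V, G.dist u v = 0 → u = v)
    (hlt : ∀ u, u ≠ v → G.dist (par u) v < G.dist u v) :
    ∀ (n : ℕ) (u : V), G.dist u v ≤ n → G.Walk u v
  | 0, u, h => SimpleGraph.Walk.nil.copy (hzero u (Nat.le_zero.mp h)).symm rfl
  | (n+1), u, _h =>
    if hu : u = v then SimpleGraph.Walk.nil.copy hu.symm rfl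
    else SimpleGraph.Walk.cons (hadj u hu)
      (wtr hadj hzero hlt n (par u) (by have := hlt u hu; omega))

lemma support_wtr (hadj : ∀ u, u ≠ v → G.Adj u (par u))
    (hzero : ∀ u : V, G.dist u v = 0 → u = v)
    (hlt : ∀ u, u ≠ v → G.dist (par u) v < G.dist u v) :
    ∀ (n : ℕ) (u : V) (h : G.dist u v ≤ n) (z : V),
      z ∈ (wtr hadj hzero hlt n u h).support → ∃ k, par^[k] u = z := by
  intro n
  induction n with
  | zero =>
    intro u h z hz
    simp only [wtr, SimpleGraph.Walk.support_copy, SimpleGraph.Walk.support_nil,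
      List.mem_singleton] at hz
    exact ⟨0, by simp [hz, hzero u (Nat.le_zero.mp h)]⟩
  | succ n ih =>
    intro u h z hz
    by_cases hu : u = v
    · simp only [wtr, hu, dif_pos, SimpleGraph.Walk.support_copy,
        SimpleGraph.Walk.support_nil, List.mem_singleton] at hz
      exact ⟨0, by simp [hz, hu]⟩
    · simp only [wtr, hu, dif_neg, not_false_iff, SimpleGraph.Walk.support_cons,
        List.mem_cons] at hz
      rcases hz with rfl | hz
      · exact ⟨0, rfl⟩
      · obtain ⟨k, hk⟩ := ih (par u) (by have := hlt u hu; omega) z hz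
        exact ⟨k + 1, by rwa [Function.iterate_succ_apply]⟩

end Aux

theorem stmt_5 {V : Type*} [Fintype V] (G : SimpleGraph V) [DecidableRel G.Adj]
    (hG : G.Connected) :
    rvc G ≤ Fintype.card V - G.maxDegree := by
  classical
  have hne : Nonempty V := hG.nonempty
  obtain ⟨v, hv⟩ := G.exists_maximal_degree_vertex
  set n := Fintype.card V with hn
  set Δ := G.maxDegree with hΔ
  have hΔlt : Δ < n := hv ▸ G.degree_lt_card_verts v
  -- the parent function
  have hzero : ∀ u : V, G.dist u v = 0 → u = v := fun u h =>
    (hG.dist_eq_zero_iff).mp h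
  let par : V → V := fun u =>
    if hu : u = v then v else Classical.choose (exists_parent hG v u hu)
  have hparv : par v = v := by simp [par]
  have hadj : ∀ u, u ≠ v → G.Adj u (par u) := by
    intro u hu
    simp only [par, dif_neg hu]
    exact (Classical.choose_spec (exists_parent hG v u hu)).1
  have hlt : ∀ u, u ≠ v → G.dist (par u) v < G.dist u v := by
    intro u hu
    simp only [par, dif_neg hu]
    have := (Classical.choose_spec (exists_parent hG v u hu)).2
    omega
  have hiter := iter_depth hparv hlt
  -- the set of vertices at distance ≥ 2
  set s : Finset V := Finset.univ.filter (fun z => 2 ≤ G.dist z v) with hs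
  have hscard : s.card ≤ n - Δ - 1 := by
    have hcompl : (Finset.univ.filter (fun z => G.dist z v ≤ 1)).card = Δ + 1 := by
      have : Finset.univ.filter (fun z => G.dist z v ≤ 1) =
          insert v (G.neighborFinset v) := by
        ext z
        simp only [Finset.mem_filter, Finset.mem_univ, true_and, Finset.mem_insert,
          mem_neighborFinset]
        constructor
        · intro h
          have h' : G.dist z v = 0 ∨ G.dist z v = 1 := by omega
          rcases h' with h' | h'
          · exact Or.inl (hzero z h')
          · exact Or.inr ((SimpleGraph.dist_eq_one_iff_adj.mp h').symm)
        · rintro (rfl | h)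
          · simp [SimpleGraph.dist_self]
          · have := SimpleGraph.dist_eq_one_iff_adj.mpr h.symm
            omega
      rw [this, Finset.card_insert_of_notMem (by simp), card_neighborFinset_eq_degree, hv]
    have hsplit : s.card + (Finset.univ.filter (fun z => G.dist z v ≤ 1)).card = n := by
      have h2 := Finset.card_filter_add_card_filter_not (s := Finset.univ)
        (p := fun z => 2 ≤ G.dist z v)
      have hfe : Finset.univ.filter (fun z => ¬ 2 ≤ G.dist z v) =
          Finset.univ.filter (fun z => G.dist z v ≤ 1) := by
        apply Finset.filter_congr
        intro z _
        simp only [not_le, eq_iff_iff]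
        omega
      rw [hfe, Finset.card_univ] at h2
      rw [hs]
      exact h2
    omega
  -- subtree of a vertex
  let sub : V → Finset V := fun z => Finset.univ.filter (fun y => ∃ k, par^[k] y = z)
  have hsub_self : ∀ z, z ∈ sub z := fun z => by
    simp only [sub, Finset.mem_filter, Finset.mem_univ, true_and]
    exact ⟨0, rfl⟩
  -- deepest element of subtree
  let ℓ : V → V := fun z =>
    Classical.choose (Finset.exists_max_image (sub z) (fun y => G.dist y v) ⟨z, hsub_self z⟩)
  have hℓ_mem : ∀ z, ℓ z ∈ sub z := fun z =>
    (Classical.choose_spec (Finset.exists_max_image (sub z) (fun y => G.dist y v)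
      ⟨z, hsub_self z⟩)).1
  have hℓ_max : ∀ z, ∀ y ∈ sub z, G.dist y v ≤ G.dist (ℓ z) v := fun z =>
    (Classical.choose_spec (Finset.exists_max_image (sub z) (fun y => G.dist y v)
      ⟨z, hsub_self z⟩)).2
  -- the index function
  let f : V → ℕ := fun z => s.toList.idxOf z
  have hf_lt : ∀ z ∈ s, f z < n - Δ - 1 := by
    intro z hz
    have : f z < s.toList.length := List.idxOf_lt_length_iff.mpr (by simpa using hz)
    simp only [Finset.length_toList] at this
    omega
  have hf_inj : ∀ z₁ ∈ s, ∀ z₂ ∈ s, f z₁ = f z₂ → z₁ = z₂ := by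
    intro z₁ h₁ z₂ h₂ h
    exact (List.idxOf_inj (by simpa using h₁)).mp h
  -- the coloring
  let c : V → ℕ := fun z =>
    if 2 ≤ G.dist z v then f z + 1
    else if G.dist z v = 1 ∧ 2 ≤ G.dist (ℓ z) v then f (ℓ z) + 1
    else 0
  have hc_lt : ∀ z, c z < n - Δ := by
    intro z
    simp only [c]
    split_ifs with h1 h2
    · have := hf_lt z (by simp [hs, h1]); omega
    · have := hf_lt (ℓ z) (by simp [hs, h2.2]); omega
    · omega
  -- facts about Q-vertices (potential internal vertices of the path from u to w)
  have hsub_trans : ∀ z a y : V, a ∈ sub z → y ∈ sub a → y ∈ sub z := by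
    intro z a y ha hy
    simp only [sub, Finset.mem_filter, Finset.mem_univ, true_and] at ha hy ⊢
    obtain ⟨m, hm⟩ := ha
    obtain ⟨k, hk⟩ := hy
    exact ⟨m + k, by rw [Function.iterate_add_apply, hk, hm]⟩
  have hdist_pos : ∀ z : V, z ≠ v → 1 ≤ G.dist z v := by
    intro z hz
    have := hzero z
    by_contra h
    exact hz (this (by omega))
  -- the main injectivity statement; Q is the property of being a potential internal vertex
  have key : ∀ (u w : V), Fintype.card V - G.maxDegree ∈
      {k : ℕ | ∃ c : V → ℕ, IsRainbowVColoring G c k} → True := fun _ _ _ => trivial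
  clear key
  have main : IsRainbowVColoring G c (n - Δ) := by
    intro u w
    set Wu := wtr hadj hzero hlt (G.dist u v) u le_rfl with hWu
    set Ww := wtr hadj hzero hlt (G.dist w v) w le_rfl with hWw
    set p := Wu.append Ww.reverse with hp
    have hbp := p.bypass_isPath
    refine ⟨p.bypass, hbp, ?_, ?_⟩
    case refine_2 => exact fun z _ => hc_lt z
    have hsup_sub := p.support_bypass_subset
    have hnodup : p.bypass.support.Nodup := hbp.support_nodup
    have hcons : p.bypass.support = u :: p.bypass.support.tail :=
      p.bypass.support_eq_cons
    -- Q z : z is a potential internal vertex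
    set Q : V → Prop := fun z =>
      ((∃ k, par^[k] u = z) ∨ (∃ k, par^[k] w = z)) ∧ z ≠ u ∧ z ≠ w with hQdef
    have hPmem : ∀ z ∈ p.bypass.support.tail.dropLast, Q z := by
      intro z hz
      have hztail : z ∈ p.bypass.support.tail := List.dropLast_subset _ hz
      have hzsup : z ∈ p.bypass.support := List.mem_of_mem_tail hztail
      have hzp : z ∈ (Wu.append Ww.reverse).support := hsup_sub hzsup
      refine ⟨?_, ?_, ?_⟩
      · rw [SimpleGraph.Walk.mem_support_append_iff] at hzp
        rcases hzp with h | h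
        · exact Or.inl (support_wtr hadj hzero hlt _ u le_rfl z h)
        · rw [SimpleGraph.Walk.support_reverse, List.mem_reverse] at h
          exact Or.inr (support_wtr hadj hzero hlt _ w le_rfl z h)
      · -- z ≠ u
        intro hzu
        rw [hcons] at hnodup
        exact (List.nodup_cons.mp hnodup).1 (hzu ▸ hztail)
      · -- z ≠ w
        intro hzw
        have hne' : p.bypass.support ≠ [] := SimpleGraph.Walk.support_ne_nil _
        have h1 : p.bypass.support.dropLast ++ [w] = p.bypass.support := by
          have h2 := List.dropLast_append_getLast hne'
          rwa [p.bypass.getLast_support] at h2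
        have hwnot : w ∉ p.bypass.support.dropLast := by
          have := hnodup
          rw [← h1] at this
          have hd := List.disjoint_of_nodup_append this
          intro hmem
          exact hd hmem (by simp)
        have hzd : z ∈ p.bypass.support.dropLast := by
          rcases htl : p.bypass.support.tail with _ | ⟨a, t⟩
          · rw [htl] at hz; simp at hz
          · rw [hcons, htl, List.dropLast_cons₂]
            rw [htl] at hz
            exact List.mem_cons_of_mem _ hz
        exact hwnot (hzw ▸ hzd)
    -- For Q-vertices distinct from v there is a strictly deeper vertex in the subtree
    have hQsub : ∀ z, Q z → z ≠ v → ∃ y ∈ sub z, G.dist z v + 1 ≤ G.dist y v := by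
      intro z hQz hzv
      obtain ⟨hanc, hzu, hzw⟩ := hQz
      rcases hanc with ⟨k, hk⟩ | ⟨k, hk⟩
      · have hk1 : 1 ≤ k := by
          rcases Nat.eq_zero_or_pos k with rfl | h
          · exact absurd hk.symm hzu
          · exact h
        have := hiter k u (hk ▸ hzv)
        rw [hk] at this
        refine ⟨u, ?_, by omega⟩
        simp only [sub, Finset.mem_filter, Finset.mem_univ, true_and]
        exact ⟨k, hk⟩
      · have hk1 : 1 ≤ k := by
          rcases Nat.eq_zero_or_pos k with rfl | h
          · exact absurd hk.symm hzw
          · exact h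
        have := hiter k w (hk ▸ hzv)
        rw [hk] at this
        refine ⟨w, ?_, by omega⟩
        simp only [sub, Finset.mem_filter, Finset.mem_univ, true_and]
        exact ⟨k, hk⟩
    -- the address of a Q-vertex
    have haddr : ∀ z, Q z → z ≠ v → ∃ a, a ∈ sub z ∧ 2 ≤ G.dist a v ∧ c z = f a + 1 ∧
        (2 ≤ G.dist z v → a = z) ∧
        (G.dist z v = 1 → ∀ y ∈ sub z, G.dist y v ≤ G.dist a v) := by
      intro z hQz hzv
      have h1 : 1 ≤ G.dist z v := hdist_pos z hzv
      rcases Nat.lt_or_ge (G.dist z v) 2 with hlt2 | hge2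
      · -- depth 1
        have hd1 : G.dist z v = 1 := by omega
        obtain ⟨y, hy, hyd⟩ := hQsub z hQz hzv
        have hℓ2 : 2 ≤ G.dist (ℓ z) v := le_trans (by omega) (hℓ_max z y hy)
        refine ⟨ℓ z, hℓ_mem z, hℓ2, ?_, by omega, fun _ => hℓ_max z⟩
        simp only [c]
        rw [if_neg (by omega : ¬ 2 ≤ G.dist z v),
          if_pos (show G.dist z v = 1 ∧ 2 ≤ G.dist (ℓ z) v from ⟨hd1, hℓ2⟩)]
      · -- depth ≥ 2
        refine ⟨z, hsub_self z, hge2, ?_, fun _ => rfl, by omega⟩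
        simp only [c, if_pos hge2]
    -- c is positive on Q-vertices other than v
    have hcpos : ∀ z, Q z → z ≠ v → 1 ≤ c z := by
      intro z hQz hzv
      obtain ⟨a, _, _, hca, _, _⟩ := haddr z hQz hzv
      omega
    -- injectivity of c on Q-vertices
    have hinj : ∀ z₁, Q z₁ → ∀ z₂, Q z₂ → c z₁ = c z₂ → z₁ = z₂ := by
      intro z₁ hQ₁ z₂ hQ₂ hcc
      by_cases h₁v : z₁ = v
      · by_cases h₂v : z₂ = v
        · rw [h₁v, h₂v]
        · exfalso
          have := hcpos z₂ hQ₂ h₂v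
          have hcv : c v = 0 := by
            simp only [c, SimpleGraph.dist_self]
            norm_num
          rw [h₁v, hcv] at hcc
          omega
      · by_cases h₂v : z₂ = v
        · exfalso
          have := hcpos z₁ hQ₁ h₁v
          have hcv : c v = 0 := by
            simp only [c, SimpleGraph.dist_self]
            norm_num
          rw [h₂v, hcv] at hcc
          omega
        · obtain ⟨a₁, ha₁s, ha₁2, hca₁, ha₁eq, ha₁max⟩ := haddr z₁ hQ₁ h₁v
          obtain ⟨a₂, ha₂s, ha₂2, hca₂, ha₂eq, ha₂max⟩ := haddr z₂ hQ₂ h₂v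
          rw [hca₁, hca₂] at hcc
          have haa : a₁ = a₂ :=
            hf_inj a₁ (by simp [hs, ha₁2]) a₂ (by simp [hs, ha₂2]) (by omega)
          have hd₁ : 1 ≤ G.dist z₁ v := hdist_pos z₁ h₁v
          have hd₂ : 1 ≤ G.dist z₂ v := hdist_pos z₂ h₂v
          rcases Nat.lt_or_ge (G.dist z₁ v) 2 with h₁lt | h₁ge
          · rcases Nat.lt_or_ge (G.dist z₂ v) 2 with h₂lt | h₂ge
            · -- both depth 1
              have hd₁' : G.dist z₁ v = 1 := by omega
              have hd₂' : G.dist z₂ v = 1 := by omega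
              have hm₁ : a₁ ∈ sub z₁ := ha₁s
              have hm₂ : a₁ ∈ sub z₂ := haa ▸ ha₂s
              simp only [sub, Finset.mem_filter, Finset.mem_univ, true_and] at hm₁ hm₂
              obtain ⟨m₁, hmm₁⟩ := hm₁
              obtain ⟨m₂, hmm₂⟩ := hm₂
              rcases le_total m₁ m₂ with hle | hle
              · have hcomp : par^[m₂ - m₁] z₁ = z₂ := by
                  have : par^[(m₂ - m₁) + m₁] a₁ = z₂ := by
                    rw [Nat.sub_add_cancel hle]; exact hmm₂
                  rwa [Function.iterate_add_apply, hmm₁] at this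
                rcases Nat.eq_or_lt_of_le hle with rfl | hlt'
                · simp only [Nat.sub_self, Function.iterate_zero_apply] at hcomp
                  exact hcomp
                · exfalso
                  have := hiter (m₂ - m₁) z₁ (hcomp ▸ h₂v)
                  rw [hcomp] at this
                  omega
              · have hcomp : par^[m₁ - m₂] z₂ = z₁ := by
                  have : par^[(m₁ - m₂) + m₂] a₁ = z₁ := by
                    rw [Nat.sub_add_cancel hle]; exact hmm₁
                  rwa [Function.iterate_add_apply, hmm₂] at this
                rcases Nat.eq_or_lt_of_le hle with rfl | hlt'
                · simp only [Nat.sub_self, Function.iterate_zero_apply] at hcomp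
                  exact hcomp.symm
                · exfalso
                  have := hiter (m₁ - m₂) z₂ (hcomp ▸ h₁v)
                  rw [hcomp] at this
                  omega
            · -- depth z₁ = 1, depth z₂ ≥ 2 : a₁ = a₂ = z₂ contradicts maximality
              exfalso
              have ha₂z : a₂ = z₂ := ha₂eq h₂ge
              obtain ⟨y, hy, hyd⟩ := hQsub z₂ hQ₂ h₂v
              have hysub : y ∈ sub z₁ := hsub_trans z₁ a₁ y ha₁s (by rw [haa, ha₂z]; exact hy)
              have := ha₁max (by omega) y hysub
              rw [haa, ha₂z] at this
              omega
          · rcases Nat.lt_or_ge (G.dist z₂ v) 2 with h₂lt | h₂ge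
            · -- symmetric
              exfalso
              have ha₁z : a₁ = z₁ := ha₁eq h₁ge
              obtain ⟨y, hy, hyd⟩ := hQsub z₁ hQ₁ h₁v
              have hysub : y ∈ sub z₂ := hsub_trans z₂ a₂ y ha₂s
                (by rw [← haa, ha₁z]; exact hy)
              have := ha₂max (by omega) y hysub
              rw [← haa, ha₁z] at this
              omega
            · rw [← ha₁eq h₁ge, ← ha₂eq h₂ge, haa]
    -- conclude: the list of internal vertices has nodup colors
    have hLnodup : p.bypass.support.tail.dropLast.Nodup := by
      have ht : p.bypass.support.tail.Nodup := by
        rw [hcons] at hnodup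
        exact (List.nodup_cons.mp hnodup).2
      exact ht.sublist (List.dropLast_sublist _)
    exact List.Nodup.map_on
      (fun x hx y hy hxy => hinj x (hPmem x hx) y (hPmem y hy) hxy) hLnodup
  exact Nat.sInf_le ⟨c, main⟩
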